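/- Two rooted multigraphs (G, S) and (H, R) have rooted-isomorphic unfolding trees if and only if there exist non-edge-collapsing graph equivalence relations ∼_G on G and ∼_H on H such that (G/∼_G, [S]) is rooted-isomorphic to (H/∼_H, [R]). -/

import Mathlib

/-- A directed multigraph: vertices, edges, origin and terminus maps. -/
structure Multigraph where
  V : Type
  E : Type
  o : E → V
  t : E → V

namespace Multigraph

/-- Graph homomorphism. -/
structure Hom (G H : Multigraph) where
  onV : G.V → H.V
  onE : G.E → H.E
  map_o : ∀ e, H.o (onE e) = onV (G.o e)
  map_t : ∀ e, H.t (onE e) = onV (G.t e)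

/-- Graph isomorphism. -/
structure Iso (G H : Multigraph) extends Hom G H where
  bijV : Function.Bijective onV
  bijE : Function.Bijective onE

/-- Rooted isomorphism of rooted multigraphs. -/
def RootedIso (G : Multigraph) (S : G.V) (H : Multigraph) (R : H.V) : Prop :=
  ∃ φ : Iso G H, φ.onV S = R

/-- Outgoing edge neighbourhood of a vertex. -/
def Eo (G : Multigraph) (v : G.V) : Set G.E := {e | G.o e = v}

/-- Incoming edge neighbourhood of a vertex. -/
def Et (G : Multigraph) (v : G.V) : Set G.E := {e | G.t e = v}

/-- A graph equivalence relation: compatible equivalences on vertices and edges. -/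
structure GraphEquiv (G : Multigraph) where
  rV : G.V → G.V → Prop
  rE : G.E → G.E → Prop
  equivV : Equivalence rV
  equivE : Equivalence rE
  compat_o : ∀ e f, rE e f → rV (G.o e) (G.o f)
  compat_t : ∀ e f, rE e f → rV (G.t e) (G.t f)

/-- Non-edge-collapsing graph equivalence relation. -/
def GraphEquiv.NonEdgeCollapsing {G : Multigraph} (s : GraphEquiv G) : Prop :=
  ∀ v v', s.rV v v' → ∀ e, G.o e = v → ∃! e', G.o e' = v' ∧ s.rE e e'

/-- Quotient graph by a graph equivalence relation. -/
def GraphEquiv.quot {G : Multigraph} (s : GraphEquiv G) : Multigraph where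
  V := Quot s.rV
  E := Quot s.rE
  o := Quot.lift (fun e => Quot.mk s.rV (G.o e)) (fun e f h => Quot.sound (s.compat_o e f h))
  t := Quot.lift (fun e => Quot.mk s.rV (G.t e)) (fun e f h => Quot.sound (s.compat_t e f h))

/-- A graph is non-redundant if its only non-edge-collapsing equivalence relation is trivial. -/
def NonRedundant (G : Multigraph) : Prop :=
  ∀ s : GraphEquiv G, s.NonEdgeCollapsing →
    (∀ v w, s.rV v w → v = w) ∧ (∀ e f, s.rE e f → e = f)

/-- Directed walks in `G` starting at `S`, indexed by the terminus. -/
inductive Walk (G : Multigraph) (S : G.V) : G.V → Type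
  | nil : Walk G S S
  | snoc {v : G.V} (w : Walk G S v) (e : G.E) (h : G.o e = v) : Walk G S (G.t e)

/-- Length of a walk. -/
def Walk.length {G : Multigraph} {S : G.V} : ∀ {v : G.V}, Walk G S v → ℕ
  | _, .nil => 0
  | _, .snoc w _ _ => w.length + 1

/-- Reachability by a directed walk. -/
def Reaches (G : Multigraph) (x y : G.V) : Prop := Nonempty (Walk G x y)

/-- `S` is a root: every vertex is reachable from `S`. -/
def IsRoot (G : Multigraph) (S : G.V) : Prop := ∀ v, Reaches G S v

/-- No two edges share a terminus. -/
def NoClashes (G : Multigraph) : Prop := ∀ e f : G.E, G.t e = G.t f → e = f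

/-- No non-empty closed walks. -/
def Acyclic (G : Multigraph) : Prop := ∀ v : G.V, ∀ w : Walk G v v, w.length = 0

/-- The outgoing subgraph `G_x`: induced on the vertices reachable from `x`. -/
def outGraph (G : Multigraph) (x : G.V) : Multigraph where
  V := {y : G.V // Reaches G x y}
  E := {e : G.E // Reaches G x (G.o e)}
  o := fun e => ⟨G.o e.1, e.2⟩
  t := fun e => ⟨G.t e.1, e.2.elim fun w => ⟨w.snoc e.1 rfl⟩⟩

/-- The natural root of `G_x`. -/
def rootOut (G : Multigraph) (x : G.V) : (outGraph G x).V := ⟨x, ⟨Walk.nil⟩⟩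

/-- o-equivalence of vertices: rooted isomorphism of their outgoing graphs. -/
def OEquiv (G : Multigraph) (v w : G.V) : Prop :=
  RootedIso (outGraph G v) (rootOut G v) (outGraph G w) (rootOut G w)

/-- Walks starting at `S` (with arbitrary terminus). -/
abbrev WalkFrom (G : Multigraph) (S : G.V) : Type := Σ v : G.V, Walk G S v

/-- Terminus of a walk. -/
def term {G : Multigraph} {S : G.V} (w : WalkFrom G S) : G.V := w.1

/-- The unfolding tree `T(G, S)`: vertices are walks from `S`, edges are one-step extensions. -/
def unfoldTree (G : Multigraph) (S : G.V) : Multigraph where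
  V := WalkFrom G S
  E := Σ v : G.V, Walk G S v × {e : G.E // G.o e = v}
  o := fun x => ⟨x.1, x.2.1⟩
  t := fun x => ⟨G.t x.2.2.1, x.2.1.snoc x.2.2.1 x.2.2.2⟩

/-- The empty walk at `S`, root of the unfolding tree. -/
def nilWalk (G : Multigraph) (S : G.V) : WalkFrom G S := ⟨S, Walk.nil⟩

/-- Prefix order on walks from `S`. -/
inductive IsPrefix (G : Multigraph) (S : G.V) : WalkFrom G S → WalkFrom G S → Prop
  | refl (w : WalkFrom G S) : IsPrefix G S w w
  | snoc {w : WalkFrom G S} {v : G.V} (u : Walk G S v) (e : G.E) (h : G.o e = v) :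
      IsPrefix G S w ⟨v, u⟩ → IsPrefix G S w ⟨G.t e, u.snoc e h⟩

/-- The half-tree of the unfolding tree rooted at the walk `w`. -/
def halfTree (G : Multigraph) (S : G.V) (w : WalkFrom G S) : Multigraph where
  V := {u : WalkFrom G S // IsPrefix G S w u}
  E := {x : Σ v : G.V, Walk G S v × {e : G.E // G.o e = v} // IsPrefix G S w ⟨x.1, x.2.1⟩}
  o := fun x => ⟨⟨x.1.1, x.1.2.1⟩, x.2⟩
  t := fun x => ⟨⟨G.t x.1.2.2.1, x.1.2.1.snoc x.1.2.2.1 x.1.2.2.2⟩,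
    IsPrefix.snoc x.1.2.1 x.1.2.2.1 x.1.2.2.2 x.2⟩

/-- A subspace of the unfolding tree: a set of walks closed under extension. -/
def IsSubspace (G : Multigraph) (S : G.V) (𝒮 : Set (WalkFrom G S)) : Prop :=
  ∀ w ∈ 𝒮, ∀ w', IsPrefix G S w w' → w' ∈ 𝒮

/-- An inescapable subspace: every walk extends into it. -/
def Inescapable (G : Multigraph) (S : G.V) (𝒮 : Set (WalkFrom G S)) : Prop :=
  ∀ w : WalkFrom G S, ∃ u ∈ 𝒮, IsPrefix G S w u

/-- A cofinite subspace: a finite union of half-trees. -/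
def CofiniteSubspace (G : Multigraph) (S : G.V) (𝒮 : Set (WalkFrom G S)) : Prop :=
  ∃ F : Set (WalkFrom G S), F.Finite ∧ 𝒮 = {u | ∃ x ∈ F, IsPrefix G S x u}

/-- `B` is a basis of the subspace `𝒮`: a prefix-antichain in `𝒮` such that every
walk in `𝒮` has a prefix in `B`. -/
def IsBasis (G : Multigraph) (S : G.V) (𝒮 B : Set (WalkFrom G S)) : Prop :=
  B ⊆ 𝒮 ∧ (∀ b ∈ B, ∀ b' ∈ B, IsPrefix G S b b' → b = b') ∧
    ∀ w ∈ 𝒮, ∃ b ∈ B, IsPrefix G S b w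

/-- Deleting a set of edges from a graph (also removing vertices all of whose
incident edges are deleted). -/
def deleteEdges (G : Multigraph) (F : Set G.E) : Multigraph where
  V := {v : G.V // ¬((∃ e, G.o e = v ∨ G.t e = v) ∧ ∀ e, (G.o e = v ∨ G.t e = v) → e ∈ F)}
  E := {e : G.E // e ∉ F}
  o := fun e => ⟨G.o e.1, fun h => e.2 (h.2 e.1 (Or.inl rfl))⟩
  t := fun e => ⟨G.t e.1, fun h => e.2 (h.2 e.1 (Or.inr rfl))⟩

/-- Two trees are almost isomorphic: after removing finite subtrees (given by their
finite edge sets), the remainders are isomorphic. -/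
def AlmostIso (T1 T2 : Multigraph) : Prop :=
  ∃ F1 : Set T1.E, F1.Finite ∧ ∃ F2 : Set T2.E, F2.Finite ∧
    Nonempty (Iso (deleteEdges T1 F1) (deleteEdges T2 F2))

open scoped Classical in
/-- The multiset of termini of the outgoing edges of `v`. -/
noncomputable def outSum (G : Multigraph) [Fintype G.E] (v : G.V) : Multiset G.V :=
  ∑ e ∈ Finset.univ.filter (fun e => G.o e = v), ({G.t e} : Multiset G.V)

/-- The defining relations of the graph monoid: `v = Σ_{e ∈ E_o(v)} t(e)` for non-sinks. -/
def monoidRel (G : Multigraph) [Fintype G.E] : Multiset G.V → Multiset G.V → Prop :=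
  fun s u => ∃ v : G.V, (∃ e, G.o e = v) ∧ s = {v} ∧ u = outSum G v

/-- Equality in the graph monoid `M(G)`: the additive congruence generated by the
graph relations on the free commutative monoid `Multiset G.V`. -/
def monoidEq (G : Multigraph) [Fintype G.E] (s u : Multiset G.V) : Prop :=
  addConGen (monoidRel G) s u

/-- A robustly rooted graph: it has a root, and every root has an out-neighbour that
is again a root. -/
def RobustlyRooted (G : Multigraph) : Prop :=
  (∃ S, IsRoot G S) ∧ ∀ v, IsRoot G v → ∃ e, G.o e = v ∧ IsRoot G (G.t e)

/-- The two-vertex multigraph with adjacency matrix `(A B; C D)`;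
`false` is the vertex `x`, `true` is the vertex `y`. -/
def twoVertexGraph (A B C D : ℕ) : Multigraph where
  V := Bool
  E := (Fin A ⊕ Fin B) ⊕ (Fin C ⊕ Fin D)
  o := fun e => match e with | .inl _ => false | .inr _ => true
  t := fun e => match e with
    | .inl (.inl _) => false
    | .inl (.inr _) => true
    | .inr (.inl _) => false
    | .inr (.inr _) => true

instance (A B C D : ℕ) : Fintype (twoVertexGraph A B C D).E :=
  inferInstanceAs (Fintype ((Fin A ⊕ Fin B) ⊕ (Fin C ⊕ Fin D)))

end Multigraph

namespace Multigraph

variable {A B C : Multigraph}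

/-! ### Iso algebra -/

def Iso.refl (A : Multigraph) : Iso A A :=
  ⟨⟨id, id, fun _ => rfl, fun _ => rfl⟩, Function.bijective_id, Function.bijective_id⟩

def Iso.comp (φ : Iso A B) (ψ : Iso B C) : Iso A C where
  onV := ψ.onV ∘ φ.onV
  onE := ψ.onE ∘ φ.onE
  map_o e := by simp [ψ.map_o, φ.map_o]
  map_t e := by simp [ψ.map_t, φ.map_t]
  bijV := ψ.bijV.comp φ.bijV
  bijE := ψ.bijE.comp φ.bijE

noncomputable def Iso.symm (φ : Iso A B) : Iso B A where
  onV := (Equiv.ofBijective _ φ.bijV).symm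
  onE := (Equiv.ofBijective _ φ.bijE).symm
  map_o f := by
    rw [Equiv.eq_symm_apply]
    show φ.onV _ = B.o f
    symm
    conv_lhs => rw [show f = φ.onE ((Equiv.ofBijective _ φ.bijE).symm f) from
      ((Equiv.ofBijective _ φ.bijE).apply_symm_apply f).symm]
    exact φ.map_o _
  map_t f := by
    rw [Equiv.eq_symm_apply]
    show φ.onV _ = B.t f
    symm
    conv_lhs => rw [show f = φ.onE ((Equiv.ofBijective _ φ.bijE).symm f) from
      ((Equiv.ofBijective _ φ.bijE).apply_symm_apply f).symm]
    exact φ.map_t _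
  bijV := (Equiv.ofBijective _ φ.bijV).symm.bijective
  bijE := (Equiv.ofBijective _ φ.bijE).symm.bijective

@[simp] lemma Iso.symm_onV_apply (φ : Iso A B) (x : A.V) : φ.symm.onV (φ.onV x) = x :=
  (Equiv.ofBijective _ φ.bijV).symm_apply_apply x

@[simp] lemma Iso.onV_symm_apply (φ : Iso A B) (y : B.V) : φ.onV (φ.symm.onV y) = y :=
  (Equiv.ofBijective _ φ.bijV).apply_symm_apply y

@[simp] lemma Iso.symm_onE_apply (φ : Iso A B) (x : A.E) : φ.symm.onE (φ.onE x) = x :=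
  (Equiv.ofBijective _ φ.bijE).symm_apply_apply x

@[simp] lemma Iso.onE_symm_apply (φ : Iso A B) (y : B.E) : φ.onE (φ.symm.onE y) = y :=
  (Equiv.ofBijective _ φ.bijE).apply_symm_apply y

theorem RootedIso.refl (A : Multigraph) (a : A.V) : RootedIso A a A a := ⟨Iso.refl A, rfl⟩

theorem RootedIso.symm {a : A.V} {b : B.V} (h : RootedIso A a B b) : RootedIso B b A a := by
  obtain ⟨φ, hφ⟩ := h
  exact ⟨φ.symm, by rw [← hφ, φ.symm_onV_apply]⟩

theorem RootedIso.trans {a : A.V} {b : B.V} {c : C.V} (h : RootedIso A a B b)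
    (h' : RootedIso B b C c) : RootedIso A a C c := by
  obtain ⟨φ, hφ⟩ := h; obtain ⟨ψ, hψ⟩ := h'
  exact ⟨φ.comp ψ, by simp [Iso.comp, hφ, hψ]⟩

end Multigraph
namespace Multigraph

variable {A B : Multigraph}

/-! ### Walk helpers -/

def snocF {a : A.V} (x : WalkFrom A a) (e : A.E) (h : A.o e = x.1) : WalkFrom A a :=
  ⟨A.t e, x.2.snoc e h⟩

def unsnocF {a : A.V} : WalkFrom A a → Option (WalkFrom A a × A.E)
  | ⟨_, .nil⟩ => none
  | ⟨_, .snoc u e _⟩ => some (⟨_, u⟩, e)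

@[simp] lemma unsnocF_nil {a : A.V} : unsnocF (nilWalk A a) = none := rfl

@[simp] lemma unsnocF_snocF {a : A.V} (x : WalkFrom A a) (e : A.E) (h : A.o e = x.1) :
    unsnocF (snocF x e h) = some (x, e) := by
  obtain ⟨z, w⟩ := x; rfl

lemma snocF_congr {a : A.V} {x x' : WalkFrom A a} {e e' : A.E} (hx : x = x') (he : e = e')
    {h : A.o e = x.1} {h' : A.o e' = x'.1} : snocF x e h = snocF x' e' h' := by
  subst hx; subst he; rfl

/-! ### Grafting -/

def Walk.graft {v : A.V} (e : A.E) (he : A.o e = v) :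
    ∀ {z : A.V}, Walk A (A.t e) z → Walk A v z
  | _, .nil => Walk.nil.snoc e he
  | _, .snoc u f hf => (u.graft e he).snoc f hf

def graftF {v : A.V} (e : A.E) (he : A.o e = v) (u : WalkFrom A (A.t e)) : WalkFrom A v :=
  ⟨u.1, u.2.graft e he⟩

def oneF {v : A.V} (e : A.E) (he : A.o e = v) : WalkFrom A v :=
  ⟨A.t e, Walk.nil.snoc e he⟩

@[simp] lemma graftF_nil {v : A.V} (e : A.E) (he : A.o e = v) :
    graftF e he (nilWalk A (A.t e)) = oneF e he := rfl

lemma oneF_eq_snocF {v : A.V} (e : A.E) (he : A.o e = v) :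
    oneF e he = snocF (nilWalk A v) e he := rfl

lemma graftF_snocF {v : A.V} (e : A.E) (he : A.o e = v) (u : WalkFrom A (A.t e)) (f : A.E)
    (hf : A.o f = u.1) :
    graftF e he (snocF u f hf) = snocF (graftF e he u) f hf := by
  obtain ⟨z, w⟩ := u; rfl

lemma unsnocF_graftF_isSome {v : A.V} (e : A.E) (he : A.o e = v) (u : WalkFrom A (A.t e)) :
    (unsnocF (graftF e he u)).isSome := by
  obtain ⟨z, w⟩ := u
  cases w with
  | nil => rfl
  | snoc u f hf => rfl

lemma graftF_inj {v : A.V} {e : A.E} {he : A.o e = v} :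
    ∀ (u u' : WalkFrom A (A.t e)), graftF e he u = graftF e he u' → u = u' := by
  rintro ⟨z, w⟩
  induction w with
  | nil =>
    rintro ⟨z', w'⟩ h
    cases w' with
    | nil => rfl
    | snoc u₀ f hf =>
      exfalso
      have h2 := congrArg unsnocF h
      have : unsnocF (graftF e he (⟨A.t e, Walk.nil⟩ : WalkFrom A (A.t e)))
          = some (nilWalk A v, e) := rfl
      rw [this] at h2
      have : unsnocF (graftF e he (⟨_, Walk.snoc u₀ f hf⟩ : WalkFrom A (A.t e)))
          = some (graftF e he ⟨_, u₀⟩, f) := rfl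
      rw [this] at h2
      have h3 : nilWalk A v = graftF e he ⟨_, u₀⟩ := by
        injection h2 with h2'; exact congrArg Prod.fst h2'
      have := unsnocF_graftF_isSome e he (⟨_, u₀⟩ : WalkFrom A (A.t e))
      rw [← h3] at this
      simp at this
  | snoc u₀ f hf ih =>
    rintro ⟨z', w'⟩ h
    cases w' with
    | nil =>
      exfalso
      have h2 := congrArg unsnocF h
      have : unsnocF (graftF e he (⟨_, Walk.snoc u₀ f hf⟩ : WalkFrom A (A.t e)))
          = some (graftF e he ⟨_, u₀⟩, f) := rfl
      rw [this] at h2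
      have : unsnocF (graftF e he (⟨A.t e, Walk.nil⟩ : WalkFrom A (A.t e)))
          = some (nilWalk A v, e) := rfl
      rw [this] at h2
      have h3 : graftF e he ⟨_, u₀⟩ = nilWalk A v := by
        injection h2 with h2'; exact congrArg Prod.fst h2'
      have := unsnocF_graftF_isSome e he (⟨_, u₀⟩ : WalkFrom A (A.t e))
      rw [h3] at this
      simp at this
    | snoc u₀' f' hf' =>
      have h2 := congrArg unsnocF h
      have e1 : unsnocF (graftF e he (⟨_, Walk.snoc u₀ f hf⟩ : WalkFrom A (A.t e)))
          = some (graftF e he ⟨_, u₀⟩, f) := rfl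
      have e2 : unsnocF (graftF e he (⟨_, Walk.snoc u₀' f' hf'⟩ : WalkFrom A (A.t e)))
          = some (graftF e he ⟨_, u₀'⟩, f') := rfl
      rw [e1, e2] at h2
      injection h2 with h2'
      have hg : graftF e he ⟨_, u₀⟩ = graftF e he ⟨_, u₀'⟩ := congrArg Prod.fst h2'
      have hff : f = f' := congrArg Prod.snd h2'
      have hu := ih _ hg
      show snocF (⟨_, u₀⟩ : WalkFrom A (A.t e)) f hf = snocF (⟨_, u₀'⟩ : WalkFrom A (A.t e)) f' hf'
      exact snocF_congr hu hff

end Multigraph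
namespace Multigraph

variable {A B : Multigraph}

/-! ### Tree edges and grafting of edges -/

def graftE {v : A.V} (e : A.E) (he : A.o e = v) (X : (unfoldTree A (A.t e)).E) :
    (unfoldTree A v).E :=
  ⟨X.1, X.2.1.graft e he, X.2.2⟩

lemma o_graftE {v : A.V} (e : A.E) (he : A.o e = v) (X : (unfoldTree A (A.t e)).E) :
    (unfoldTree A v).o (graftE e he X) = graftF e he ((unfoldTree A (A.t e)).o X) := rfl

lemma t_graftE {v : A.V} (e : A.E) (he : A.o e = v) (X : (unfoldTree A (A.t e)).E) :
    (unfoldTree A v).t (graftE e he X) = graftF e he ((unfoldTree A (A.t e)).t X) := rfl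

/-- The underlying graph edge of a tree edge. -/
def edgeOf {a : A.V} (X : (unfoldTree A a).E) : A.E := X.2.2.1

lemma treeE_ext {a : A.V} {X X' : (unfoldTree A a).E}
    (h1 : (unfoldTree A a).o X = (unfoldTree A a).o X') (h2 : edgeOf X = edgeOf X') :
    X = X' := by
  obtain ⟨z, u, f, hf⟩ := X
  obtain ⟨z', u', f', hf'⟩ := X'
  injection h1 with hz hu
  subst hz
  have hu' := eq_of_heq hu
  subst hu'
  dsimp [edgeOf] at h2
  subst h2
  rfl

lemma graftE_inj {v : A.V} {e : A.E} {he : A.o e = v} (X X' : (unfoldTree A (A.t e)).E)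
    (h : graftE e he X = graftE e he X') : X = X' := by
  have h1 : graftF e he ((unfoldTree A (A.t e)).o X) = graftF e he ((unfoldTree A (A.t e)).o X') := by
    rw [← o_graftE, ← o_graftE, h]
  have h2 := congrArg (edgeOf (A := A) (a := v)) h
  exact treeE_ext (graftF_inj _ _ h1) h2

/-! ### Prefix lemmas -/

lemma isPrefix_step {a : A.V} {x : WalkFrom A a} (E : (unfoldTree A a).E)
    (h : IsPrefix A a x ((unfoldTree A a).o E)) : IsPrefix A a x ((unfoldTree A a).t E) := by
  obtain ⟨z, u, f, hf⟩ := E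
  exact IsPrefix.snoc u f hf h

lemma Hom.map_isPrefix {a : A.V} {b : B.V} (φ : Hom (unfoldTree A a) (unfoldTree B b))
    {x y : WalkFrom A a} (h : IsPrefix A a x y) :
    IsPrefix B b (φ.onV x) (φ.onV y) := by
  induction h with
  | refl => exact IsPrefix.refl _
  | @snoc v' u f hf hp ih =>
    have hgoal : (⟨A.t f, u.snoc f hf⟩ : WalkFrom A a) = (unfoldTree A a).t ⟨v', u, f, hf⟩ := rfl
    erw [hgoal, ← φ.map_t]
    have h2 : (⟨v', u⟩ : WalkFrom A a) = (unfoldTree A a).o ⟨v', u, f, hf⟩ := rfl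
    erw [h2, ← φ.map_o] at ih
    exact isPrefix_step _ ih

lemma isPrefix_one_graft {v : A.V} (e : A.E) (he : A.o e = v) :
    ∀ (u : WalkFrom A (A.t e)), IsPrefix A v (oneF e he) (graftF e he u) := by
  rintro ⟨z, w⟩
  induction w with
  | nil => exact IsPrefix.refl _
  | snoc u f hf ih => exact IsPrefix.snoc _ f hf ih

lemma exists_graftF_of_prefix {v : A.V} {e : A.E} {he : A.o e = v} {x : WalkFrom A v}
    (h : IsPrefix A v (oneF e he) x) : ∃ u, graftF e he u = x := by
  induction h with
  | refl => exact ⟨nilWalk A (A.t e), rfl⟩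
  | @snoc v' u f hf hp ih =>
    obtain ⟨⟨z0, w0⟩, hu⟩ := ih
    injection hu with h1 h2
    subst h1
    have h2' := eq_of_heq h2
    subst h2'
    exact ⟨⟨A.t f, w0.snoc f hf⟩, rfl⟩

lemma exists_graftE_of_prefix {v : A.V} {e : A.E} {he : A.o e = v} {X : (unfoldTree A v).E}
    (h : IsPrefix A v (oneF e he) ((unfoldTree A v).o X)) : ∃ X₀, graftE e he X₀ = X := by
  obtain ⟨z, u, f, hf⟩ := X
  obtain ⟨⟨z0, w0⟩, hu⟩ := exists_graftF_of_prefix h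
  injection hu with h1 h2
  subst h1
  have h2' := eq_of_heq h2
  subst h2'
  exact ⟨⟨z0, w0, f, hf⟩, rfl⟩

end Multigraph
namespace Multigraph

variable {A B : Multigraph}

/-- CORE: an iso of unfolding trees restricts to an iso of the half-trees above
corresponding root edges, i.e. to an iso of unfolding trees of the targets. -/
theorem core {v : A.V} {w : B.V} (φ : Iso (unfoldTree A v) (unfoldTree B w))
    (hnil : φ.onV (nilWalk A v) = nilWalk B w) (e : A.E) (he : A.o e = v) :
    ∃ (f : B.E) (hf : B.o f = w) (ψ : Iso (unfoldTree A (A.t e)) (unfoldTree B (B.t f))),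
      (∀ u, φ.onV (graftF e he u) = graftF f hf (ψ.onV u)) ∧
      ψ.onV (nilWalk A (A.t e)) = nilWalk B (B.t f) := by
  rcases hYdef : φ.onE ⟨v, Walk.nil, e, he⟩ with ⟨zY, uY, f, hf⟩
  have hoY := φ.map_o ⟨v, Walk.nil, e, he⟩
  rw [hYdef] at hoY
  have hoY' : (⟨zY, uY⟩ : WalkFrom B w) = nilWalk B w := by
    rw [show ((unfoldTree B w).o ⟨zY, uY, f, hf⟩) = (⟨zY, uY⟩ : WalkFrom B w) from rfl] at hoY
    rw [hoY]
    exact hnil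
  injection hoY' with h1 h2
  subst h1
  have h2' := eq_of_heq h2
  subst h2'
  -- now f : B.E, hf : B.o f = w
  have hone : φ.onV (oneF e he) = oneF f hf := by
    have := φ.map_t ⟨v, Walk.nil, e, he⟩
    rw [hYdef] at this
    exact this.symm
  have hpre : ∀ u : WalkFrom A (A.t e),
      IsPrefix B _ (oneF f hf) (φ.onV (graftF e he u)) := by
    intro u
    have := φ.toHom.map_isPrefix (isPrefix_one_graft e he u)
    rwa [hone] at this
  have hpreE : ∀ X : (unfoldTree A (A.t e)).E,
      IsPrefix B _ (oneF f hf) ((unfoldTree B _).o (φ.onE (graftE e he X))) := by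
    intro X
    rw [φ.map_o, o_graftE]
    exact hpre _
  set ψV : WalkFrom A (A.t e) → WalkFrom B (B.t f) :=
    fun u => (exists_graftF_of_prefix (hpre u)).choose with hψVdef
  have hψV : ∀ u, graftF f hf (ψV u) = φ.onV (graftF e he u) :=
    fun u => (exists_graftF_of_prefix (hpre u)).choose_spec
  set ψE : (unfoldTree A (A.t e)).E → (unfoldTree B (B.t f)).E :=
    fun X => (exists_graftE_of_prefix (hpreE X)).choose with hψEdef
  have hψE : ∀ X, graftE f hf (ψE X) = φ.onE (graftE e he X) :=
    fun X => (exists_graftE_of_prefix (hpreE X)).choose_spec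
  have hmapo : ∀ X, (unfoldTree B (B.t f)).o (ψE X) = ψV ((unfoldTree A (A.t e)).o X) := by
    intro X
    apply graftF_inj (e := f) (he := hf)
    erw [← o_graftE, hψE, φ.map_o, o_graftE, hψV]
  have hmapt : ∀ X, (unfoldTree B (B.t f)).t (ψE X) = ψV ((unfoldTree A (A.t e)).t X) := by
    intro X
    apply graftF_inj (e := f) (he := hf)
    erw [← t_graftE, hψE, φ.map_t, t_graftE, hψV]
  have hsymmone : φ.symm.onV (oneF f hf) = oneF e he := by
    erw [← hone, φ.symm_onV_apply]
  have hbijV : Function.Bijective ψV := by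
    constructor
    · intro u u' h
      apply graftF_inj (e := e) (he := he)
      apply φ.bijV.injective
      rw [← hψV, ← hψV, h]
    · intro u'
      have hx : IsPrefix A v (oneF e he) (φ.symm.onV (graftF f hf u')) := by
        have := φ.symm.toHom.map_isPrefix (isPrefix_one_graft f hf u')
        rwa [hsymmone] at this
      obtain ⟨u₀, hu₀⟩ := exists_graftF_of_prefix hx
      refine ⟨u₀, ?_⟩
      apply graftF_inj (e := f) (he := hf)
      erw [hψV, hu₀, φ.onV_symm_apply]
  have hbijE : Function.Bijective ψE := by
    constructor
    · intro X X' h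
      apply graftE_inj (he := he) (e := e)
      apply φ.bijE.injective
      rw [← hψE, ← hψE, h]
    · intro Y₀
      have hx : IsPrefix A v (oneF e he) ((unfoldTree A v).o (φ.symm.onE (graftE f hf Y₀))) := by
        rw [φ.symm.map_o, o_graftE]
        have := φ.symm.toHom.map_isPrefix (isPrefix_one_graft f hf ((unfoldTree B (B.t f)).o Y₀))
        rwa [hsymmone] at this
      obtain ⟨X₀, hX₀⟩ := exists_graftE_of_prefix hx
      refine ⟨X₀, ?_⟩
      apply graftE_inj (he := hf)
      rw [hψE, hX₀, φ.onE_symm_apply]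
  refine ⟨f, hf, ⟨⟨ψV, ψE, hmapo, hmapt⟩, hbijV, hbijE⟩, fun u => (hψV u).symm, ?_⟩
  apply graftF_inj (e := f) (he := hf)
  show graftF f hf (ψV (nilWalk A (A.t e))) = graftF f hf (nilWalk B (B.t f))
  rw [hψV, graftF_nil, graftF_nil, hone]

end Multigraph
namespace Multigraph

variable {A B : Multigraph}

/-! ### Appending walks -/

def appendW {a : A.V} : ∀ {z : A.V}, Walk A a z → WalkFrom A z → WalkFrom A a
  | _, .nil, u => u
  | _, .snoc w e h, u => appendW w (graftF e h u)

lemma appendW_snocF {a : A.V} : ∀ {z : A.V} (x : Walk A a z) (u : WalkFrom A z) (e : A.E)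
    (h : A.o e = u.1) (h' : A.o e = (appendW x u).1),
    appendW x (snocF u e h) = snocF (appendW x u) e h' := by
  intro z x
  induction x with
  | nil => intro u e h h'; rfl
  | snoc w f hf ih =>
    intro u e h h'
    show appendW w (graftF f hf (snocF u e h)) = _
    rw [graftF_snocF]
    exact ih _ e h h'

lemma appendW_nil {a : A.V} : ∀ {z : A.V} (x : Walk A a z),
    appendW x (nilWalk A z) = ⟨z, x⟩ := by
  intro z x
  induction x with
  | nil => rfl
  | snoc w f hf ih =>
    show appendW w (graftF f hf (nilWalk A (A.t f))) = _
    rw [graftF_nil, oneF_eq_snocF, appendW_snocF w _ f hf (by rw [ih]; exact hf)]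
    exact snocF_congr ih rfl

/-- Lemma B: an iso of unfolding trees induces isos of all sub-half-trees. -/
theorem lemmaB {a : A.V} {b : B.V} (φ : Iso (unfoldTree A a) (unfoldTree B b))
    (hnil : φ.onV (nilWalk A a) = nilWalk B b) :
    ∀ {z : A.V} (x : Walk A a z),
      ∃ (y : WalkFrom B b) (ψ : Iso (unfoldTree A z) (unfoldTree B y.1)),
        ψ.onV (nilWalk A z) = nilWalk B y.1 ∧
        ∀ u, φ.onV (appendW x u) = appendW y.2 (ψ.onV u) := by
  intro z x
  induction x with
  | nil => exact ⟨nilWalk B b, φ, hnil, fun u => rfl⟩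
  | snoc w e h ih =>
    obtain ⟨y, ψ, hψnil, hinv⟩ := ih
    obtain ⟨f, hf, ψ', hinv', hnil'⟩ := core ψ hψnil e h
    refine ⟨snocF y f hf, ψ', hnil', ?_⟩
    intro u
    show φ.onV (appendW w (graftF e h u)) = appendW y.2 (graftF f hf (ψ'.onV u))
    rw [hinv, hinv']

theorem rootedIso_term {a : A.V} {b : B.V} (φ : Iso (unfoldTree A a) (unfoldTree B b))
    (hnil : φ.onV (nilWalk A a) = nilWalk B b) (x : WalkFrom A a) :
    RootedIso (unfoldTree A x.1) (nilWalk A x.1) (unfoldTree B (φ.onV x).1)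
      (nilWalk B (φ.onV x).1) := by
  obtain ⟨y, ψ, hψnil, hinv⟩ := lemmaB φ hnil x.2
  have hyx : φ.onV x = y := by
    have h1 := hinv (nilWalk A x.1)
    rw [hψnil, appendW_nil, appendW_nil] at h1
    exact h1
  rw [hyx]
  exact ⟨ψ, hψnil⟩

/-! ### oneF extraction -/

@[simp] lemma unsnocF_oneF {v : A.V} (e : A.E) (he : A.o e = v) :
    unsnocF (oneF e he) = some (nilWalk A v, e) := by
  erw [oneF_eq_snocF, unsnocF_snocF]

lemma oneF_inj {v : A.V} {e e' : A.E} {he : A.o e = v} {he' : A.o e' = v}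
    (h : oneF e he = oneF e' he') : e = e' := by
  have := congrArg unsnocF h
  rw [unsnocF_oneF, unsnocF_oneF] at this
  injection this with this'
  exact congrArg Prod.snd this'

/-- Lemma A (forward): a rooted iso of unfolding trees gives a bijection of the
outgoing edges with rooted-isomorphic unfoldings of targets. -/
theorem exists_edge_equiv {v : A.V} {w : B.V}
    (h : RootedIso (unfoldTree A v) (nilWalk A v) (unfoldTree B w) (nilWalk B w)) :
    ∃ σ : {e : A.E // A.o e = v} ≃ {f : B.E // B.o f = w},
      ∀ e : {e : A.E // A.o e = v}, RootedIso (unfoldTree A (A.t e.1)) (nilWalk A (A.t e.1))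
        (unfoldTree B (B.t (σ e).1)) (nilWalk B (B.t (σ e).1)) := by
  obtain ⟨φ, hnil⟩ := h
  have key : ∀ (e : {e : A.E // A.o e = v}), ∃ f : {f : B.E // B.o f = w},
      φ.onV (oneF e.1 e.2) = oneF f.1 f.2 ∧
      RootedIso (unfoldTree A (A.t e.1)) (nilWalk A (A.t e.1))
        (unfoldTree B (B.t f.1)) (nilWalk B (B.t f.1)) := by
    rintro ⟨e, he⟩
    obtain ⟨f, hf, ψ, hinv, hn⟩ := core φ hnil e he
    refine ⟨⟨f, hf⟩, ?_, ⟨ψ, hn⟩⟩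
    have := hinv (nilWalk A (A.t e))
    rwa [graftF_nil, hn, graftF_nil] at this
  choose σ0 hP hQ using key
  have hinj : Function.Injective σ0 := by
    intro e e' hee
    have h1 := hP e
    have h2 := hP e'
    rw [hee] at h1
    have h3 : oneF e.1 e.2 = oneF e'.1 e'.2 := φ.bijV.injective (h1.trans h2.symm)
    exact Subtype.ext (oneF_inj h3)
  have hsurj : Function.Surjective σ0 := by
    rintro ⟨f, hf⟩
    have hnil' : φ.symm.onV (nilWalk B w) = nilWalk A v := by
      erw [← hnil, φ.symm_onV_apply]
    obtain ⟨e, he, ψ, hinv, hn⟩ := core φ.symm hnil' f hf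
    have h1 : φ.symm.onV (oneF f hf) = oneF e he := by
      have := hinv (nilWalk B (B.t f))
      rwa [graftF_nil, hn, graftF_nil] at this
    have h2 : φ.onV (oneF e he) = oneF f hf := by
      erw [← h1, φ.onV_symm_apply]
    exact ⟨⟨e, he⟩, Subtype.ext (oneF_inj ((hP ⟨e, he⟩).symm.trans h2))⟩
  refine ⟨Equiv.ofBijective σ0 ⟨hinj, hsurj⟩, fun e => ?_⟩
  exact hQ e

end Multigraph
namespace Multigraph

lemma rel_of_quot_eq {α : Type} {r : α → α → Prop} (hr : Equivalence r) {a b : α}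
    (h : Quot.mk r a = Quot.mk r b) : r a b := by
  have h2 : Quot.lift (r a) (fun x y hxy => propext ⟨fun h' => hr.trans h' hxy,
        fun h' => hr.trans h' (hr.symm hxy)⟩) (Quot.mk r a)
      = Quot.lift (r a) (fun x y hxy => propext ⟨fun h' => hr.trans h' hxy,
        fun h' => hr.trans h' (hr.symm hxy)⟩) (Quot.mk r b) := by rw [h]
  have h3 : r a a = r a b := h2
  exact h3 ▸ hr.refl a

variable {A Z : Multigraph}

lemma GraphEquiv.quot_o_mk (s : GraphEquiv A) (e : A.E) :
    s.quot.o (Quot.mk s.rE e) = Quot.mk s.rV (A.o e) := rfl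

lemma GraphEquiv.quot_t_mk (s : GraphEquiv A) (e : A.E) :
    s.quot.t (Quot.mk s.rE e) = Quot.mk s.rV (A.t e) := rfl

/-- The edge classifying map determined by fiberwise out-edge equivalences. -/
def muOf {q : A.V → Z.V} (σ : ∀ v : A.V, {e : A.E // A.o e = v} ≃ {f : Z.E // Z.o f = q v}) :
    A.E → Z.E :=
  fun e => (σ (A.o e) ⟨e, rfl⟩).1

lemma muOf_spec {q : A.V → Z.V}
    (σ : ∀ v : A.V, {e : A.E // A.o e = v} ≃ {f : Z.E // Z.o f = q v})
    (v : A.V) (e : A.E) (h : A.o e = v) : muOf σ e = (σ v ⟨e, h⟩).1 := by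
  subst h; rfl

lemma o_muOf {q : A.V → Z.V}
    (σ : ∀ v : A.V, {e : A.E // A.o e = v} ≃ {f : Z.E // Z.o f = q v}) (e : A.E) :
    Z.o (muOf σ e) = q (A.o e) :=
  (σ (A.o e) ⟨e, rfl⟩).2

/-- Build a graph equivalence from classifying data. -/
def mkGE (rV : A.V → A.V → Prop) (hrV : Equivalence rV)
    (q : A.V → Z.V) (hq : ∀ v v', rV v v' ↔ q v = q v')
    (σ : ∀ v : A.V, {e : A.E // A.o e = v} ≃ {f : Z.E // Z.o f = q v})
    (hσt : ∀ e e' : A.E, muOf σ e = muOf σ e' → rV (A.t e) (A.t e')) : GraphEquiv A where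
  rV := rV
  rE := fun e e' => muOf σ e = muOf σ e'
  equivV := hrV
  equivE := ⟨fun _ => rfl, Eq.symm, Eq.trans⟩
  compat_o := fun e e' h => by
    rw [hq]
    rw [← o_muOf σ e, ← o_muOf σ e', h]
  compat_t := hσt

lemma mkGE_nec (rV : A.V → A.V → Prop) (hrV : Equivalence rV)
    (q : A.V → Z.V) (hq : ∀ v v', rV v v' ↔ q v = q v')
    (σ : ∀ v : A.V, {e : A.E // A.o e = v} ≃ {f : Z.E // Z.o f = q v})
    (hσt : ∀ e e' : A.E, muOf σ e = muOf σ e' → rV (A.t e) (A.t e')) :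
    (mkGE rV hrV q hq σ hσt).NonEdgeCollapsing := by
  intro v v' hvv' e he
  have hqq : q v = q v' := (hq v v').1 hvv'
  have hoz : Z.o (muOf σ e) = q v' := by rw [o_muOf, he, hqq]
  set y : {f : Z.E // Z.o f = q v'} := ⟨muOf σ e, hoz⟩ with hy
  refine ⟨((σ v').symm y).1, ⟨((σ v').symm y).2, ?_⟩, ?_⟩
  · show muOf σ e = muOf σ ((σ v').symm y).1
    rw [muOf_spec σ v' _ ((σ v').symm y).2]
    have : (⟨((σ v').symm y).1, ((σ v').symm y).2⟩ : {e : A.E // A.o e = v'}) = (σ v').symm y := rfl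
    rw [this, Equiv.apply_symm_apply]
  · rintro e'' ⟨he'', hμ⟩
    have h1 : σ v' ⟨e'', he''⟩ = y := by
      apply Subtype.ext
      show (σ v' ⟨e'', he''⟩).1 = muOf σ e
      rw [← muOf_spec σ v' e'' he'']
      exact ((mkGE rV hrV q hq σ hσt).equivE.symm hμ : _)
    have h2 : (⟨e'', he''⟩ : {e : A.E // A.o e = v'}) = (σ v').symm y := by
      rw [← h1, Equiv.symm_apply_apply]
    exact congrArg Subtype.val h2

end Multigraph
namespace Multigraph

/-- Rooted isomorphism of unfolding trees, as a relation on vertices. -/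
abbrev rIsoV (A B : Multigraph) (v : A.V) (w : B.V) : Prop :=
  RootedIso (unfoldTree A v) (nilWalk A v) (unfoldTree B w) (nilWalk B w)

lemma rIsoV.equivalence (A : Multigraph) : Equivalence (rIsoV A A) :=
  ⟨fun _ => RootedIso.refl _ _, RootedIso.symm, RootedIso.trans⟩

variable {G H : Multigraph}

theorem mkGE_quot_rootedIso (S : G.V) (R : H.V)
    (rVG : G.V → G.V → Prop) (hrVG : Equivalence rVG)
    (rVH : H.V → H.V → Prop) (hrVH : Equivalence rVH)
    (qG : G.V → H.V) (hqG_iff : ∀ v v', rVG v v' ↔ qG v = qG v')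
    (qH : H.V → H.V) (hqH_iff : ∀ w w', rVH w w' ↔ qH w = qH w')
    (σG : ∀ v : G.V, {e : G.E // G.o e = v} ≃ {f : H.E // H.o f = qG v})
    (σH : ∀ w : H.V, {e : H.E // H.o e = w} ≃ {f : H.E // H.o f = qH w})
    (hcompatG : ∀ e e' : G.E, muOf σG e = muOf σG e' → rVG (G.t e) (G.t e'))
    (hcompatH : ∀ f f' : H.E, muOf σH f = muOf σH f' → rVH (H.t f) (H.t f'))
    (h1 : ∀ v v', rVH (qG v) (qG v') → qG v = qG v')
    (h2 : ∀ w : H.V, ∃ v : G.V, rVH (qG v) w)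
    (h3 : ∀ e : G.E, rVH (H.t (muOf σG e)) (qG (G.t e)))
    (h4 : rVH (qG S) R) :
    RootedIso (mkGE rVG hrVG qG hqG_iff σG hcompatG).quot (Quot.mk rVG S)
      (mkGE rVH hrVH qH hqH_iff σH hcompatH).quot (Quot.mk rVH R) := by
  have hnecH := mkGE_nec rVH hrVH qH hqH_iff σH hcompatH
  have wfV : ∀ v v', rVG v v' → Quot.mk rVH (qG v) = Quot.mk rVH (qG v') := by
    intro v v' hvv
    rw [(hqG_iff v v').1 hvv]
  have wfE : ∀ e e', (mkGE rVG hrVG qG hqG_iff σG hcompatG).rE e e' →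
      Quot.mk (fun f f' => muOf σH f = muOf σH f') (muOf σG e)
        = Quot.mk (fun f f' => muOf σH f = muOf σH f') (muOf σG e') := by
    intro e e' hee
    rw [show muOf σG e = muOf σG e' from hee]
  refine ⟨⟨⟨Quot.lift (fun v => Quot.mk rVH (qG v)) wfV,
    Quot.lift (fun e => Quot.mk (fun f f' => muOf σH f = muOf σH f') (muOf σG e)) wfE,
    ?_, ?_⟩, ?_, ?_⟩, ?_⟩
  · -- map_o
    refine Quot.ind ?_
    intro e
    rw [GraphEquiv.quot_o_mk]
    show Quot.mk rVH (H.o (muOf σG e)) = Quot.mk rVH (qG (G.o e))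
    rw [o_muOf]
  · -- map_t
    refine Quot.ind ?_
    intro e
    rw [GraphEquiv.quot_t_mk]
    show Quot.mk rVH (H.t (muOf σG e)) = Quot.mk rVH (qG (G.t e))
    exact Quot.sound (h3 e)
  · -- bijV
    constructor
    · intro x y
      induction x using Quot.ind with | _ v => ?_
      induction y using Quot.ind with | _ v' => ?_
      intro hxy
      have hq : qG v = qG v' := h1 v v' (rel_of_quot_eq hrVH hxy)
      exact Quot.sound ((hqG_iff v v').2 hq)
    · intro y
      induction y using Quot.ind with | _ w => ?_
      obtain ⟨v, hvw⟩ := h2 w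
      exact ⟨Quot.mk rVG v, Quot.sound hvw⟩
  · -- bijE
    constructor
    · intro x y
      induction x using Quot.ind with | _ e => ?_
      induction y using Quot.ind with | _ e' => ?_
      intro hxy
      have hker : muOf σH (muOf σG e) = muOf σH (muOf σG e') :=
        rel_of_quot_eq (r := fun f f' => muOf σH f = muOf σH f') ⟨fun _ => rfl, fun h => h.symm, fun h h' => h.trans h'⟩ hxy
      have hrVHo : rVH (H.o (muOf σG e)) (H.o (muOf σG e')) :=
        (mkGE rVH hrVH qH hqH_iff σH hcompatH).compat_o _ _ hker
      rw [o_muOf σG e, o_muOf σG e'] at hrVHo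
      have hz : qG (G.o e) = qG (G.o e') := h1 _ _ hrVHo
      have he1 : muOf σH (muOf σG e) = (σH (qG (G.o e)) ⟨muOf σG e, o_muOf σG e⟩).1 :=
        muOf_spec σH _ _ (o_muOf σG e)
      have he2 : muOf σH (muOf σG e') = (σH (qG (G.o e)) ⟨muOf σG e', by rw [o_muOf, ← hz]⟩).1 :=
        muOf_spec σH _ _ _
      rw [he1, he2] at hker
      have h5 := (σH (qG (G.o e))).injective (Subtype.ext hker)
      exact Quot.sound (congrArg Subtype.val h5 : muOf σG e = muOf σG e')
    · intro c
      induction c using Quot.ind with | _ f => ?_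
      obtain ⟨v, hvf⟩ := h2 (H.o f)
      have hvw : rVH (H.o f) (qG v) := hrVH.symm hvf
      obtain ⟨f₀, ⟨hf₀o, hf₀k⟩, -⟩ := hnecH _ _ hvw f rfl
      refine ⟨Quot.mk _ ((σG v).symm ⟨f₀, hf₀o⟩).1, ?_⟩
      show Quot.mk (fun f f' => muOf σH f = muOf σH f')
        (muOf σG ((σG v).symm ⟨f₀, hf₀o⟩).1) = Quot.mk _ f
      have hμ : muOf σG ((σG v).symm ⟨f₀, hf₀o⟩).1 = f₀ := by
        rw [muOf_spec σG v _ ((σG v).symm ⟨f₀, hf₀o⟩).2]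
        exact congrArg Subtype.val ((σG v).apply_symm_apply ⟨f₀, hf₀o⟩)
      rw [hμ]
      exact Quot.sound (hf₀k.symm : muOf σH f₀ = muOf σH f)
  · -- root
    show Quot.mk rVH (qG S) = Quot.mk rVH R
    exact Quot.sound h4

end Multigraph
namespace Multigraph

theorem forward_dir (G : Multigraph) (S : G.V) (H : Multigraph) (R : H.V)
    (hS : IsRoot G S) (hR : IsRoot H R)
    (h : RootedIso (unfoldTree G S) (nilWalk G S) (unfoldTree H R) (nilWalk H R)) :
    ∃ (sG : GraphEquiv G) (sH : GraphEquiv H),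
      sG.NonEdgeCollapsing ∧ sH.NonEdgeCollapsing ∧
      RootedIso sG.quot (Quot.mk sG.rV S) sH.quot (Quot.mk sH.rV R) := by
  obtain ⟨φ, hφnil⟩ := h
  have hTEleft : ∀ v : G.V, ∃ w : H.V, rIsoV G H v w := by
    intro v
    obtain ⟨x⟩ := hS v
    exact ⟨(φ.onV ⟨v, x⟩).1, rootedIso_term φ hφnil ⟨v, x⟩⟩
  have hφnil' : φ.symm.onV (nilWalk H R) = nilWalk G S := by erw [← hφnil, φ.symm_onV_apply]
  have hTEright : ∀ w : H.V, ∃ v : G.V, rIsoV G H v w := by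
    intro w
    obtain ⟨x⟩ := hR w
    exact ⟨(φ.symm.onV ⟨w, x⟩).1, RootedIso.symm (rootedIso_term φ.symm hφnil' ⟨w, x⟩)⟩
  -- representatives of the H-classes
  set repQ : Quot (rIsoV H H) → H.V := fun t => (Quot.exists_rep t).choose with hrepQdef
  have hrepQ : ∀ t, Quot.mk (rIsoV H H) (repQ t) = t := fun t => (Quot.exists_rep t).choose_spec
  set qH : H.V → H.V := fun w => repQ (Quot.mk (rIsoV H H) w) with hqHdef
  have hqH_rel : ∀ w, rIsoV H H (qH w) w := fun w =>
    rel_of_quot_eq (rIsoV.equivalence H) (hrepQ (Quot.mk _ w))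
  have hqH_eq : ∀ w w', rIsoV H H w w' → qH w = qH w' := fun w w' hww =>
    congrArg repQ (Quot.sound hww)
  have hqH_iff : ∀ w w', rIsoV H H w w' ↔ qH w = qH w' := by
    intro w w'
    refine ⟨hqH_eq w w', fun hq => ?_⟩
    have h1 := hqH_rel w'
    rw [← hq] at h1
    exact RootedIso.trans (RootedIso.symm (hqH_rel w)) h1
  -- companions of G-vertices
  choose cG hcG using hTEleft
  set qG : G.V → H.V := fun v => qH (cG v) with hqGdef
  have hTEq : ∀ v, rIsoV G H v (qG v) :=
    fun v => RootedIso.trans (hcG v) (RootedIso.symm (hqH_rel (cG v)))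
  have hqG_eq : ∀ v v', rIsoV G G v v' → qG v = qG v' := by
    intro v v' hvv
    exact hqH_eq _ _ (RootedIso.trans (RootedIso.trans (RootedIso.symm (hcG v)) hvv) (hcG v'))
  have hqG_iff : ∀ v v', rIsoV G G v v' ↔ qG v = qG v' := by
    intro v v'
    refine ⟨hqG_eq v v', fun hq => ?_⟩
    have h1 := hTEq v'
    rw [← hq] at h1
    exact RootedIso.trans (hTEq v) (RootedIso.symm h1)
  -- edge matchings
  choose σG hσG using fun v => exists_edge_equiv (hTEq v)
  choose σH hσH using fun w => exists_edge_equiv (RootedIso.symm (hqH_rel w))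
  have hμGt : ∀ e : G.E, rIsoV G H (G.t e) (H.t (muOf σG e)) := fun e => hσG (G.o e) ⟨e, rfl⟩
  have hμHt : ∀ f : H.E, rIsoV H H (H.t f) (H.t (muOf σH f)) := fun f => hσH (H.o f) ⟨f, rfl⟩
  have hcompatG : ∀ e e' : G.E, muOf σG e = muOf σG e' → rIsoV G G (G.t e) (G.t e') := by
    intro e e' hmu
    have h2 := hμGt e'
    rw [← hmu] at h2
    exact RootedIso.trans (hμGt e) (RootedIso.symm h2)
  have hcompatH : ∀ f f' : H.E, muOf σH f = muOf σH f' → rIsoV H H (H.t f) (H.t f') := by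
    intro f f' hmu
    have h2 := hμHt f'
    rw [← hmu] at h2
    exact RootedIso.trans (hμHt f) (RootedIso.symm h2)
  refine ⟨mkGE (rIsoV G G) (rIsoV.equivalence G) qG hqG_iff σG hcompatG,
    mkGE (rIsoV H H) (rIsoV.equivalence H) qH hqH_iff σH hcompatH,
    mkGE_nec _ _ _ _ _ _, mkGE_nec _ _ _ _ _ _, ?_⟩
  refine mkGE_quot_rootedIso S R _ _ _ _ qG hqG_iff qH hqH_iff σG σH hcompatG hcompatH
    ?_ ?_ ?_ ?_
  · intro v v' hr
    exact hqG_eq _ _ (RootedIso.trans (hTEq v) (RootedIso.trans hr (RootedIso.symm (hTEq v'))))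
  · intro w
    obtain ⟨v, hTE⟩ := hTEright w
    exact ⟨v, RootedIso.trans (RootedIso.symm (hTEq v)) hTE⟩
  · intro e
    exact RootedIso.trans (RootedIso.symm (hμGt e)) (hTEq (G.t e))
  · exact RootedIso.trans (RootedIso.symm (hTEq S)) ⟨φ, hφnil⟩

end Multigraph
namespace Multigraph

variable {A B : Multigraph}

lemma walkFrom_cast {a : A.V} {z z' : A.V} (h : z = z') (w : Walk A a z) :
    (⟨z', h ▸ w⟩ : WalkFrom A a) = ⟨z, w⟩ := by subst h; rfl

def Hom.mapWalk (φ : Hom A B) {a : A.V} : ∀ {z : A.V}, Walk A a z → Walk B (φ.onV a) (φ.onV z)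
  | _, .nil => Walk.nil
  | _, .snoc w e h => φ.map_t e ▸ ((φ.mapWalk w).snoc (φ.onE e) (by rw [φ.map_o, h]))

def Hom.mapWalkF (φ : Hom A B) {a : A.V} (x : WalkFrom A a) : WalkFrom B (φ.onV a) :=
  ⟨φ.onV x.1, φ.mapWalk x.2⟩

@[simp] lemma Hom.mapWalkF_nil (φ : Hom A B) (a : A.V) :
    φ.mapWalkF (nilWalk A a) = nilWalk B (φ.onV a) := rfl

lemma Hom.mapWalkF_snocF (φ : Hom A B) {a : A.V} (x : WalkFrom A a) (e : A.E)
    (h : A.o e = x.1) (h' : B.o (φ.onE e) = (φ.mapWalkF x).1) :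
    φ.mapWalkF (snocF x e h) = snocF (φ.mapWalkF x) (φ.onE e) h' := by
  obtain ⟨z, w⟩ := x
  exact walkFrom_cast (φ.map_t e) _

lemma Hom.o_onE_eq (φ : Hom A B) {a : A.V} (x : WalkFrom A a) (e : A.E) (h : A.o e = x.1) :
    B.o (φ.onE e) = (φ.mapWalkF x).1 := by rw [φ.map_o, h]; rfl

lemma Hom.mapWalkF_injective (φ : Hom A B) (hV : Function.Injective φ.onV)
    (hE : Function.Injective φ.onE) {a : A.V} :
    ∀ (x y : WalkFrom A a), φ.mapWalkF x = φ.mapWalkF y → x = y := by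
  rintro ⟨z, w⟩
  induction w with
  | nil =>
    rintro ⟨z', w'⟩ h
    cases w' with
    | nil => rfl
    | snoc u e he =>
      exfalso
      have h2 := congrArg unsnocF h
      rw [show (⟨A.t e, u.snoc e he⟩ : WalkFrom A a)
          = snocF (⟨_, u⟩ : WalkFrom A a) e he from rfl] at h2
      rw [φ.mapWalkF_snocF _ e he (φ.o_onE_eq _ e he)] at h2
      rw [show φ.mapWalkF (⟨a, Walk.nil⟩ : WalkFrom A a) = nilWalk B (φ.onV a) from rfl] at h2
      rw [unsnocF_nil, unsnocF_snocF] at h2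
      cases h2
  | snoc u e he ih =>
    rintro ⟨z', w'⟩ h
    cases w' with
    | nil =>
      exfalso
      have h2 := congrArg unsnocF h
      rw [show (⟨A.t e, u.snoc e he⟩ : WalkFrom A a)
          = snocF (⟨_, u⟩ : WalkFrom A a) e he from rfl] at h2
      rw [φ.mapWalkF_snocF _ e he (φ.o_onE_eq _ e he)] at h2
      rw [show φ.mapWalkF (⟨a, Walk.nil⟩ : WalkFrom A a) = nilWalk B (φ.onV a) from rfl] at h2
      rw [unsnocF_nil, unsnocF_snocF] at h2
      cases h2
    | snoc u' e' he' =>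
      have h2 := congrArg unsnocF h
      rw [show (⟨A.t e, u.snoc e he⟩ : WalkFrom A a)
          = snocF (⟨_, u⟩ : WalkFrom A a) e he from rfl,
        show (⟨A.t e', u'.snoc e' he'⟩ : WalkFrom A a)
          = snocF (⟨_, u'⟩ : WalkFrom A a) e' he' from rfl] at h2
      rw [φ.mapWalkF_snocF _ e he (φ.o_onE_eq _ e he),
        φ.mapWalkF_snocF _ e' he' (φ.o_onE_eq _ e' he'),
        unsnocF_snocF, unsnocF_snocF] at h2
      injection h2 with h3
      have hu : φ.mapWalkF (⟨_, u⟩ : WalkFrom A a) = φ.mapWalkF ⟨_, u'⟩ :=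
        congrArg Prod.fst h3
      have hee : e = e' := hE (congrArg Prod.snd h3)
      exact snocF_congr (ih _ hu) hee

lemma Iso.mapWalkF_surjective (φ : Iso A B) {a : A.V} :
    ∀ (y : WalkFrom B (φ.onV a)), ∃ x, φ.toHom.mapWalkF x = y := by
  rintro ⟨z, w⟩
  induction w with
  | nil => exact ⟨nilWalk A a, rfl⟩
  | snoc u f hf ih =>
    obtain ⟨⟨zx, wx⟩, hx⟩ := ih
    obtain ⟨e0, he0⟩ := φ.bijE.surjective f
    have hfst : φ.onV zx = (⟨_, u⟩ : WalkFrom B (φ.onV a)).1 := congrArg Sigma.fst hx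
    have ho : A.o e0 = zx := by
      apply φ.bijV.injective
      rw [← φ.map_o, he0]
      rw [hf]
      exact hfst.symm
    refine ⟨snocF ⟨zx, wx⟩ e0 ho, ?_⟩
    rw [φ.toHom.mapWalkF_snocF _ e0 ho (φ.toHom.o_onE_eq _ e0 ho)]
    rw [show (⟨B.t f, u.snoc f hf⟩ : WalkFrom B (φ.onV a))
      = snocF (⟨_, u⟩ : WalkFrom B (φ.onV a)) f hf from rfl]
    exact snocF_congr hx he0

def Hom.treeHom (φ : Hom A B) (a : A.V) : Hom (unfoldTree A a) (unfoldTree B (φ.onV a)) where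
  onV := φ.mapWalkF
  onE := fun X => ⟨φ.onV X.1, φ.mapWalk X.2.1, φ.onE X.2.2.1, by rw [φ.map_o, X.2.2.2]⟩
  map_o := fun _ => rfl
  map_t := fun X => by
    obtain ⟨z, x, e, h⟩ := X
    exact (φ.mapWalkF_snocF ⟨z, x⟩ e h (φ.o_onE_eq ⟨z, x⟩ e h)).symm

lemma Hom.treeHom_onE_inj (φ : Hom A B) (hV : Function.Injective φ.onV)
    (hE : Function.Injective φ.onE) (a : A.V) :
    Function.Injective (φ.treeHom a).onE := by
  intro X X' h
  refine treeE_ext ?_ ?_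
  · refine φ.mapWalkF_injective hV hE _ _ ?_
    have h1 := ((φ.treeHom a).map_o X).symm.trans
      (((φ.treeHom a).map_o X').symm ▸ congrArg (unfoldTree B (φ.onV a)).o h)
    exact h1
  · exact hE (congrArg edgeOf h)

noncomputable def Iso.treeIso (φ : Iso A B) (a : A.V) :
    Iso (unfoldTree A a) (unfoldTree B (φ.onV a)) where
  toHom := φ.toHom.treeHom a
  bijV := ⟨fun x y => φ.toHom.mapWalkF_injective φ.bijV.injective φ.bijE.injective x y,
    fun y => φ.mapWalkF_surjective y⟩
  bijE := by
    constructor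
    · exact φ.toHom.treeHom_onE_inj φ.bijV.injective φ.bijE.injective a
    · rintro ⟨Z, U, f, hf⟩
      obtain ⟨⟨z, x⟩, hx⟩ := φ.mapWalkF_surjective (⟨Z, U⟩ : WalkFrom B (φ.onV a))
      obtain ⟨e0, he0⟩ := φ.bijE.surjective f
      have ho : A.o e0 = z := by
        apply φ.bijV.injective
        rw [← φ.map_o, he0, hf]
        exact (congrArg Sigma.fst hx).symm
      refine ⟨⟨z, x, e0, ho⟩, ?_⟩
      refine treeE_ext ?_ ?_
      · show φ.toHom.mapWalkF ⟨z, x⟩ = (⟨Z, U⟩ : WalkFrom B (φ.onV a))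
        exact hx
      · exact he0

theorem rootedIso_unfold_of_iso {a : A.V} {b : B.V} (φ : Iso A B) (hab : φ.onV a = b) :
    RootedIso (unfoldTree A a) (nilWalk A a) (unfoldTree B b) (nilWalk B b) := by
  subst hab
  exact ⟨φ.treeIso a, rfl⟩

end Multigraph
namespace Multigraph

variable {A : Multigraph}

/-- The quotient homomorphism. -/
def GraphEquiv.qhom (s : GraphEquiv A) : Hom A s.quot where
  onV := Quot.mk s.rV
  onE := Quot.mk s.rE
  map_o := fun _ => rfl
  map_t := fun _ => rfl

lemma nec_edge_unique (s : GraphEquiv A) (hnec : s.NonEdgeCollapsing) {e e' : A.E}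
    (ho : A.o e = A.o e') (hr : s.rE e e') : e = e' := by
  obtain ⟨e₀, _, huniq⟩ := hnec (A.o e) (A.o e) (s.equivV.refl _) e rfl
  have h1 := huniq e ⟨rfl, s.equivE.refl e⟩
  have h2 := huniq e' ⟨ho.symm, hr⟩
  rw [h2, h1]

lemma quot_mapWalkF_inj (s : GraphEquiv A) (hnec : s.NonEdgeCollapsing) {a : A.V} :
    ∀ (x y : WalkFrom A a), s.qhom.mapWalkF x = s.qhom.mapWalkF y → x = y := by
  rintro ⟨z, w⟩
  induction w with
  | nil =>
    rintro ⟨z', w'⟩ h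
    cases w' with
    | nil => rfl
    | snoc u e he =>
      exfalso
      have h2 := congrArg unsnocF h
      rw [show (⟨A.t e, u.snoc e he⟩ : WalkFrom A a)
          = snocF (⟨_, u⟩ : WalkFrom A a) e he from rfl] at h2
      rw [s.qhom.mapWalkF_snocF _ e he (s.qhom.o_onE_eq _ e he)] at h2
      rw [show s.qhom.mapWalkF (⟨a, Walk.nil⟩ : WalkFrom A a)
          = nilWalk s.quot (s.qhom.onV a) from rfl] at h2
      rw [unsnocF_nil, unsnocF_snocF] at h2
      cases h2
  | snoc u e he ih =>
    rintro ⟨z', w'⟩ h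
    cases w' with
    | nil =>
      exfalso
      have h2 := congrArg unsnocF h
      rw [show (⟨A.t e, u.snoc e he⟩ : WalkFrom A a)
          = snocF (⟨_, u⟩ : WalkFrom A a) e he from rfl] at h2
      rw [s.qhom.mapWalkF_snocF _ e he (s.qhom.o_onE_eq _ e he)] at h2
      rw [show s.qhom.mapWalkF (⟨a, Walk.nil⟩ : WalkFrom A a)
          = nilWalk s.quot (s.qhom.onV a) from rfl] at h2
      rw [unsnocF_nil, unsnocF_snocF] at h2
      cases h2
    | snoc u' e' he' =>
      have h2 := congrArg unsnocF h
      rw [show (⟨A.t e, u.snoc e he⟩ : WalkFrom A a)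
          = snocF (⟨_, u⟩ : WalkFrom A a) e he from rfl,
        show (⟨A.t e', u'.snoc e' he'⟩ : WalkFrom A a)
          = snocF (⟨_, u'⟩ : WalkFrom A a) e' he' from rfl] at h2
      rw [s.qhom.mapWalkF_snocF _ e he (s.qhom.o_onE_eq _ e he),
        s.qhom.mapWalkF_snocF _ e' he' (s.qhom.o_onE_eq _ e' he'),
        unsnocF_snocF, unsnocF_snocF] at h2
      injection h2 with h3
      have hu : s.qhom.mapWalkF (⟨_, u⟩ : WalkFrom A a) = s.qhom.mapWalkF ⟨_, u'⟩ :=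
        congrArg Prod.fst h3
      have huu := ih _ hu
      have hre : s.rE e e' := rel_of_quot_eq s.equivE (congrArg Prod.snd h3)
      have hoo : A.o e = A.o e' := he.trans ((congrArg Sigma.fst huu).trans he'.symm)
      exact snocF_congr huu (nec_edge_unique s hnec hoo hre)

lemma quot_mapWalkF_surj (s : GraphEquiv A) (hnec : s.NonEdgeCollapsing) {a : A.V} :
    ∀ (y : WalkFrom s.quot (Quot.mk s.rV a)), ∃ x, s.qhom.mapWalkF x = y := by
  rintro ⟨Z, W⟩
  induction W with
  | nil => exact ⟨nilWalk A a, rfl⟩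
  | snoc u f hf ih =>
    obtain ⟨⟨zx, wx⟩, hx⟩ := ih
    obtain ⟨e0, he0⟩ := Quot.exists_rep f
    have hfst : Quot.mk s.rV zx = (⟨_, u⟩ : WalkFrom s.quot (Quot.mk s.rV a)).1 :=
      congrArg Sigma.fst hx
    have ho : s.rV (A.o e0) zx := by
      refine rel_of_quot_eq s.equivV ?_
      show Quot.mk s.rV (A.o e0) = Quot.mk s.rV zx
      have : s.quot.o f = Quot.mk s.rV (A.o e0) := by rw [← he0]; rfl
      rw [← this, hf]
      exact hfst.symm
    obtain ⟨e, ⟨heo, her⟩, -⟩ := hnec (A.o e0) zx ho e0 rfl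
    refine ⟨snocF ⟨zx, wx⟩ e heo, ?_⟩
    rw [s.qhom.mapWalkF_snocF _ e heo (s.qhom.o_onE_eq _ e heo)]
    rw [show (⟨s.quot.t f, u.snoc f hf⟩ : WalkFrom s.quot (Quot.mk s.rV a))
      = snocF (⟨_, u⟩ : WalkFrom s.quot (Quot.mk s.rV a)) f hf from rfl]
    refine snocF_congr hx ?_
    show Quot.mk s.rE e = f
    rw [← he0]
    exact Quot.sound (s.equivE.symm her)

noncomputable def quotTreeIso (s : GraphEquiv A) (hnec : s.NonEdgeCollapsing) (a : A.V) :
    Iso (unfoldTree A a) (unfoldTree s.quot (Quot.mk s.rV a)) where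
  toHom := s.qhom.treeHom a
  bijV := ⟨fun x y => quot_mapWalkF_inj s hnec x y, fun y => quot_mapWalkF_surj s hnec y⟩
  bijE := by
    constructor
    · intro X X' h
      have h1 := ((s.qhom.treeHom a).map_o X).symm.trans
        (((s.qhom.treeHom a).map_o X').symm ▸
          congrArg (unfoldTree s.quot (s.qhom.onV a)).o h)
      have h2 := quot_mapWalkF_inj s hnec _ _ h1
      have hre : s.rE (edgeOf X) (edgeOf X') :=
        rel_of_quot_eq s.equivE (congrArg (edgeOf (A := s.quot) (a := s.qhom.onV a)) h)
      have hoo : A.o (edgeOf X) = A.o (edgeOf X') :=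
        X.2.2.2.trans ((congrArg Sigma.fst h2).trans X'.2.2.2.symm)
      exact treeE_ext h2 (nec_edge_unique s hnec hoo hre)
    · rintro ⟨Z, U, f, hf⟩
      obtain ⟨⟨z, x⟩, hx⟩ := quot_mapWalkF_surj s hnec (⟨Z, U⟩ : WalkFrom s.quot (Quot.mk s.rV a))
      obtain ⟨e0, he0⟩ := Quot.exists_rep f
      have ho : s.rV (A.o e0) z := by
        refine rel_of_quot_eq s.equivV ?_
        show Quot.mk s.rV (A.o e0) = Quot.mk s.rV z
        have h1 : s.quot.o f = Quot.mk s.rV (A.o e0) := by rw [← he0]; rfl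
        rw [← h1, hf]
        exact (congrArg Sigma.fst hx).symm
      obtain ⟨e, ⟨heo, her⟩, -⟩ := hnec (A.o e0) z ho e0 rfl
      refine ⟨⟨z, x, e, heo⟩, ?_⟩
      refine treeE_ext ?_ ?_
      · show s.qhom.mapWalkF ⟨z, x⟩ = (⟨Z, U⟩ : WalkFrom s.quot (Quot.mk s.rV a))
        exact hx
      · show Quot.mk s.rE e = f
        rw [← he0]
        exact Quot.sound (s.equivE.symm her)

theorem backward_dir (G : Multigraph) (S : G.V) (H : Multigraph) (R : H.V)
    (sG : GraphEquiv G) (sH : GraphEquiv H)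
    (hG : sG.NonEdgeCollapsing) (hH : sH.NonEdgeCollapsing)
    (hq : RootedIso sG.quot (Quot.mk sG.rV S) sH.quot (Quot.mk sH.rV R)) :
    RootedIso (unfoldTree G S) (nilWalk G S) (unfoldTree H R) (nilWalk H R) := by
  obtain ⟨ι, hι⟩ := hq
  have mid : RootedIso (unfoldTree sG.quot (Quot.mk sG.rV S)) (nilWalk _ _)
      (unfoldTree sH.quot (Quot.mk sH.rV R)) (nilWalk _ _) :=
    rootedIso_unfold_of_iso ι hι
  refine RootedIso.trans ⟨quotTreeIso sG hG S, rfl⟩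
    (RootedIso.trans mid (RootedIso.symm ⟨quotTreeIso sH hH R, rfl⟩))

end Multigraph


open Multigraph

/-- Two rooted multigraphs have rooted-isomorphic unfolding trees iff
suitable non-edge-collapsing quotients of them are rooted-isomorphic. -/
theorem statement7 (G : Multigraph) (S : G.V) (H : Multigraph) (R : H.V)
    (hS : IsRoot G S) (hR : IsRoot H R) :
    RootedIso (unfoldTree G S) (nilWalk G S) (unfoldTree H R) (nilWalk H R) ↔
      ∃ (sG : GraphEquiv G) (sH : GraphEquiv H),
        sG.NonEdgeCollapsing ∧ sH.NonEdgeCollapsing ∧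
        RootedIso sG.quot (Quot.mk sG.rV S) sH.quot (Quot.mk sH.rV R) := by
  constructor
  · exact forward_dir G S H R hS hR
  · rintro ⟨sG, sH, hG, hH, hq⟩
    exact backward_dir G S H R sG sH hG hH hq
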